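/- arXiv:1506.07331 — 2 statements merged into one kernel-verified Lean document; each statement's English description precedes it below -/
import Mathlib

section
/- Let H ∈ ℂ^{N×K} with HᴴH invertible, let P be a real diagonal K×K matrix with 0 < P(k,k) < 1 for all k and P ≠ 0, let ν ≥ 0, and let 𝒮 ⊆ {0,…,K−1}² contain no diagonal position (k,k). For each N₀ > 0 set M(N₀) := Hᴴ(N₀I + HHᴴ)⁻¹H − I and M̃(N₀) := P(I+M(N₀))P − P, let G(N₀) be a Hermitian matrix banded within diagonals [−ν, ν] with I+G(N₀) positive definite satisfying [(I+G(N₀))⁻¹]_ν = −[M(N₀)]_ν, and define δ₂(N₀) := sup{ 2 Re Tr(P M(N₀) R) + Tr((I+G(N₀))⁻¹ R M̃(N₀) Rᴴ) : R ∈ ℂ^{K×K} vanishing at every position outside 𝒮 }. Then δ₂(N₀) ≥ 0 for all N₀ > 0, and δ₂(N₀) = O(N₀) as N₀ → 0⁺, while δ₂(N₀) = O(1/N₀²) as N₀ → ∞. -/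
open Matrix Filter Asymptotics
open scoped ComplexOrder Topology

/-- `[A]_ν`: the matrix agreeing with `A` on the diagonals `|k − ℓ| ≤ ν` and zero elsewhere. -/
def bandPart {K : ℕ} (ν : ℕ) (A : Matrix (Fin K) (Fin K) ℂ) : Matrix (Fin K) (Fin K) ℂ :=
  Matrix.of fun k ℓ => if |((k : ℕ) : ℤ) - ((ℓ : ℕ) : ℤ)| ≤ (ν : ℤ) then A k ℓ else 0

set_option linter.unusedSectionVars false
set_option linter.unusedVariables false
set_option linter.deprecated false

namespace GMI

section
open scoped MatrixOrder Matrix.Norms.L2Operator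
lemma psd_eq_star_mul {n : Type*} [Fintype n] [DecidableEq n] {W : Matrix n n ℂ}
    (hW : W.PosSemidef) : ∃ B : Matrix n n ℂ, W = Bᴴ * B := by
  obtain ⟨B, hB⟩ := CStarAlgebra.nonneg_iff_eq_star_mul_self.mp hW.nonneg
  exact ⟨B, hB⟩
end

variable {n : Type*} [Fintype n] [DecidableEq n]

noncomputable def nsq (x : n → ℂ) : ℝ := ∑ i, Complex.normSq (x i)

lemma nsq_nonneg (x : n → ℂ) : 0 ≤ nsq x :=
  Finset.sum_nonneg fun i _ => Complex.normSq_nonneg _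

lemma star_dot_self (x : n → ℂ) : star x ⬝ᵥ x = (nsq x : ℂ) := by
  simp only [dotProduct, nsq, Pi.star_apply, Complex.star_def, Complex.ofReal_sum]
  exact Finset.sum_congr rfl fun i _ => (Complex.normSq_eq_conj_mul_self).symm

lemma star_dot_self_re (x : n → ℂ) : (star x ⬝ᵥ x).re = nsq x := by
  rw [star_dot_self]; simp

/-- Cauchy–Schwarz for the standard complex dot product, squared. -/
lemma abs_dot_sq_le (u v : n → ℂ) :
    ‖star u ⬝ᵥ v‖ ^ 2 ≤
      (∑ i, Complex.normSq (u i)) * (∑ i, Complex.normSq (v i)) := by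
  have h1 : ‖star u ⬝ᵥ v‖ ≤ ∑ i, ‖u i‖ * ‖v i‖ := by
    rw [dotProduct]
    refine le_trans (norm_sum_le _ _) (Finset.sum_le_sum fun i _ => ?_)
    simp [_root_.map_mul, Pi.star_apply, Complex.star_def, Complex.norm_conj]
  calc ‖star u ⬝ᵥ v‖ ^ 2
      ≤ (∑ i, ‖u i‖ * ‖v i‖) ^ 2 :=
        pow_le_pow_left₀ (norm_nonneg _) h1 2
    _ ≤ (∑ i, ‖u i‖ ^ 2) * (∑ i, ‖v i‖ ^ 2) :=
        Finset.sum_mul_sq_le_sq_mul_sq _ _ _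
    _ = _ := by simp [Complex.sq_norm]

lemma dot_psd_expand {B : Matrix n n ℂ} (z w : n → ℂ) :
    star z ⬝ᵥ (Bᴴ * B) *ᵥ w = star (B *ᵥ z) ⬝ᵥ (B *ᵥ w) := by
  rw [star_mulVec, ← mulVec_mulVec, dotProduct_mulVec]

/-- Cauchy–Schwarz for a PSD form, squared. -/
lemma psd_cs {W : Matrix n n ℂ} (hW : W.PosSemidef) (x y : n → ℂ) :
    ‖star x ⬝ᵥ W *ᵥ y‖ ^ 2 ≤ (star x ⬝ᵥ W *ᵥ x).re * (star y ⬝ᵥ W *ᵥ y).re := by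
  obtain ⟨B, rfl⟩ := GMI.psd_eq_star_mul hW
  rw [dot_psd_expand, dot_psd_expand, dot_psd_expand, star_dot_self_re, star_dot_self_re]
  exact abs_dot_sq_le _ _

lemma psd_re_nonneg {W : Matrix n n ℂ} (hW : W.PosSemidef) (x : n → ℂ) :
    0 ≤ (star x ⬝ᵥ W *ᵥ x).re := hW.re_dotProduct_nonneg x

/-- the quadratic form of a PSD matrix is bounded by its trace. -/
lemma qf_le_trace {W : Matrix n n ℂ} (hW : W.PosSemidef) (x : n → ℂ) :
    (star x ⬝ᵥ W *ᵥ x).re ≤ W.trace.re * nsq x := by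
  obtain ⟨B, rfl⟩ := GMI.psd_eq_star_mul hW
  rw [dot_psd_expand, star_dot_self_re]
  have h1 : ∀ i, Complex.normSq ((B *ᵥ x) i) ≤ (∑ k, Complex.normSq (B i k)) * nsq x := by
    intro i
    have : (B *ᵥ x) i = star (fun k => star (B i k)) ⬝ᵥ x := by
      simp [mulVec, dotProduct]
    rw [this, ← Complex.sq_norm]
    refine le_trans (abs_dot_sq_le _ _) ?_
    simp [nsq]
  calc nsq (B *ᵥ x) ≤ ∑ i, (∑ k, Complex.normSq (B i k)) * nsq x :=
        Finset.sum_le_sum fun i _ => h1 i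
    _ = (∑ i, ∑ k, Complex.normSq (B i k)) * nsq x := by rw [← Finset.sum_mul]
    _ = (Bᴴ * B).trace.re * nsq x := by
        congr 1
        have h2 : (Bᴴ * B).trace = ((∑ k, ∑ i, Complex.normSq (B i k) : ℝ) : ℂ) := by
          simp only [Matrix.trace, Matrix.diag, Matrix.mul_apply, Matrix.conjTranspose_apply,
            Complex.ofReal_sum, Pi.star_apply, Complex.star_def]
          exact Finset.sum_congr rfl fun k _ => Finset.sum_congr rfl fun i _ =>
            (Complex.normSq_eq_conj_mul_self).symm
        rw [h2, Complex.ofReal_re, Finset.sum_comm]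

lemma qf_single (W : Matrix n n ℂ) (k ℓ : n) :
    star (Pi.single k 1) ⬝ᵥ W *ᵥ (Pi.single ℓ 1) = W k ℓ := by
  have h1 : W *ᵥ (Pi.single ℓ 1) = fun i => W i ℓ := by
    funext i; rw [mulVec_single]; exact mul_one _
  have h2 : star (Pi.single k 1 : n → ℂ) = Pi.single k 1 := by
    ext i; simp [Pi.single_apply, apply_ite]
  rw [h1, h2, single_dotProduct, one_mul]

end GMI

namespace GMI2
open GMI
variable {n : Type*} [Fintype n] [DecidableEq n]

lemma herm_form_real {W : Matrix n n ℂ} (hW : W.IsHermitian) (x : n → ℂ) :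
    star x ⬝ᵥ W *ᵥ x = ((star x ⬝ᵥ W *ᵥ x).re : ℂ) := by
  have h : star (star x ⬝ᵥ W *ᵥ x) = star x ⬝ᵥ W *ᵥ x := by
    have h1 : star (W *ᵥ x) ⬝ᵥ x = star (star x ⬝ᵥ (W *ᵥ x)) := star_dotProduct _ _
    rw [← h1, star_mulVec, hW.eq, ← dotProduct_mulVec]
  have h2 : (starRingEnd ℂ) (star x ⬝ᵥ W *ᵥ x) = star x ⬝ᵥ W *ᵥ x := h
  exact ((Complex.conj_eq_iff_re).mp h2).symm

lemma posSemidef_of_re {W : Matrix n n ℂ} (hW : W.IsHermitian)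
    (h : ∀ x, 0 ≤ (star x ⬝ᵥ W *ᵥ x).re) : W.PosSemidef := by
  refine Matrix.PosSemidef.of_dotProduct_mulVec_nonneg hW fun x => ?_
  rw [herm_form_real hW x]
  exact Complex.zero_le_real.mpr (h x)

lemma trace_psd_re_nonneg {X Y : Matrix n n ℂ} (hX : X.PosSemidef) (hY : Y.PosSemidef) :
    0 ≤ (X * Y).trace.re := by
  obtain ⟨B, rfl⟩ := GMI.psd_eq_star_mul hX
  have h1 : (Bᴴ * B * Y).trace = (B * Y * Bᴴ).trace := by
    rw [Matrix.mul_assoc, trace_mul_comm, Matrix.mul_assoc]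
  rw [h1]
  have h2 : (B * Y * Bᴴ).PosSemidef := hY.mul_mul_conjTranspose_same B
  have h3 : ∀ k, 0 ≤ ((B * Y * Bᴴ) k k).re := by
    intro k
    have h4 := psd_re_nonneg h2 (Pi.single k 1)
    rwa [qf_single] at h4
  rw [Matrix.trace, Complex.re_sum]
  exact Finset.sum_nonneg fun k _ => h3 k

lemma inv_qf_lower {W : Matrix n n ℂ} (hW : W.PosDef) {β : ℝ} (hβ : 0 < β)
    (hup : ∀ x, (star x ⬝ᵥ W *ᵥ x).re ≤ β * nsq x) (x : n → ℂ) :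
    nsq x ≤ β * (star x ⬝ᵥ W⁻¹ *ᵥ x).re := by
  set y := W⁻¹ *ᵥ x with hy
  have hinvPsd : (W⁻¹).PosSemidef := hW.posSemidef.inv
  have ht0 : 0 ≤ (star x ⬝ᵥ y).re := psd_re_nonneg hinvPsd x
  have hWy : W *ᵥ y = x := by
    rw [hy, mulVec_mulVec, Matrix.mul_nonsing_inv _ ((Matrix.isUnit_iff_isUnit_det W).mp hW.isUnit),
      one_mulVec]
  have hyx : (star y ⬝ᵥ x).re = (star x ⬝ᵥ y).re := by
    rw [star_dotProduct y x]; exact Complex.conj_re _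
  have hcs := psd_cs hW.posSemidef x y
  rw [hWy, star_dot_self] at hcs
  have habs : ‖(nsq x : ℂ)‖ = nsq x := by
    rw [Complex.norm_real, Real.norm_eq_abs, abs_of_nonneg (nsq_nonneg x)]
  rw [habs, hyx] at hcs
  rcases eq_or_lt_of_le (nsq_nonneg x) with h0 | h0
  · rw [← h0]; positivity
  · have h2 : nsq x * nsq x ≤ (β * (star x ⬝ᵥ y).re) * nsq x := by
      have := mul_le_mul_of_nonneg_right (hup x) ht0
      nlinarith [hcs]
    exact le_of_mul_le_mul_right h2 h0

lemma inv_qf_upper {W : Matrix n n ℂ} (hW : W.PosDef) {m : ℝ} (hm : 0 < m)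
    (hlo : ∀ x, m * nsq x ≤ (star x ⬝ᵥ W *ᵥ x).re) (x : n → ℂ) :
    (star x ⬝ᵥ W⁻¹ *ᵥ x).re ≤ (1 / m) * nsq x := by
  set y := W⁻¹ *ᵥ x with hy
  have hinvPsd : (W⁻¹).PosSemidef := hW.posSemidef.inv
  have ht0 : 0 ≤ (star x ⬝ᵥ y).re := psd_re_nonneg hinvPsd x
  have hWy : W *ᵥ y = x := by
    rw [hy, mulVec_mulVec, Matrix.mul_nonsing_inv _ ((Matrix.isUnit_iff_isUnit_det W).mp hW.isUnit),
      one_mulVec]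
  have hyx : (star y ⬝ᵥ x).re = (star x ⬝ᵥ y).re := by
    rw [star_dotProduct y x]; exact Complex.conj_re _
  have hformy : (star y ⬝ᵥ W *ᵥ y).re = (star x ⬝ᵥ y).re := by rw [hWy, hyx]
  have hny : m * nsq y ≤ (star x ⬝ᵥ y).re := by rw [← hformy]; exact hlo y
  have htle : (star x ⬝ᵥ y).re ≤ ‖star x ⬝ᵥ y‖ := Complex.re_le_norm _
  have habs2 : ‖star x ⬝ᵥ y‖ ^ 2 ≤ nsq x * nsq y := abs_dot_sq_le x y
  rcases eq_or_lt_of_le ht0 with h0 | h0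
  · rw [← h0]
    have := nsq_nonneg x
    positivity
  · have h2 : (star x ⬝ᵥ y).re * (star x ⬝ᵥ y).re ≤ (1 / m * nsq x) * (star x ⬝ᵥ y).re := by
      have hq : (star x ⬝ᵥ y).re ^ 2 ≤ nsq x * nsq y := by
        nlinarith [htle, habs2, norm_nonneg (star x ⬝ᵥ y)]
      have hnyy : nsq y ≤ (star x ⬝ᵥ y).re / m := by
        rw [le_div_iff₀ hm]; linarith [hny]
      have hx0 := nsq_nonneg x
      have h5 : nsq x * nsq y ≤ nsq x * ((star x ⬝ᵥ y).re / m) :=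
        mul_le_mul_of_nonneg_left hnyy hx0
      calc (star x ⬝ᵥ y).re * (star x ⬝ᵥ y).re = (star x ⬝ᵥ y).re ^ 2 := (sq _).symm
        _ ≤ nsq x * nsq y := hq
        _ ≤ nsq x * ((star x ⬝ᵥ y).re / m) := h5
        _ = (1 / m * nsq x) * (star x ⬝ᵥ y).re := by ring
    exact le_of_mul_le_mul_right h2 h0
end GMI2

namespace GMI3
open GMI GMI2
variable {n : Type*} [Fintype n] [DecidableEq n]

noncomputable def fro (R : Matrix n n ℂ) : ℝ := ∑ k, ∑ ℓ, Complex.normSq (R k ℓ)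

lemma fro_nonneg (R : Matrix n n ℂ) : 0 ≤ fro R :=
  Finset.sum_nonneg fun _ _ => Finset.sum_nonneg fun _ _ => Complex.normSq_nonneg _

lemma trace_col_form (A R : Matrix n n ℂ) :
    (Rᴴ * A * R).trace = ∑ m, star (fun k => R k m) ⬝ᵥ A *ᵥ (fun k => R k m) := by
  simp only [Matrix.trace, Matrix.diag, Matrix.mul_apply, dotProduct, Matrix.mulVec,
    Matrix.conjTranspose_apply, Pi.star_apply, Finset.sum_mul, Finset.mul_sum]
  refine Finset.sum_congr rfl fun m _ => ?_
  rw [Finset.sum_comm]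
  refine Finset.sum_congr rfl fun k _ => Finset.sum_congr rfl fun ℓ _ => by ring

lemma fro_eq_sum_cols (R : Matrix n n ℂ) : fro R = ∑ m, nsq (fun k => R k m) := by
  rw [fro, Finset.sum_comm]; rfl

lemma quad_lower {A : Matrix n n ℂ} {β : ℝ} (hβ : 0 < β)
    (hAform : ∀ x, nsq x ≤ β * (star x ⬝ᵥ A *ᵥ x).re) (R : Matrix n n ℂ) :
    fro R ≤ β * (Rᴴ * A * R).trace.re := by
  rw [trace_col_form, Complex.re_sum, Finset.mul_sum, fro_eq_sum_cols]
  exact Finset.sum_le_sum fun m _ => hAform _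

lemma trace_mul_re_expand (B R : Matrix n n ℂ) :
    (B * R).trace.re = ∑ k, ∑ ℓ, (B k ℓ * R ℓ k).re := by
  simp only [Matrix.trace, Matrix.diag, Matrix.mul_apply, Complex.re_sum]

lemma lin_bound (B R : Matrix n n ℂ) (hRdiag : ∀ k, R k k = 0) {ε : ℝ} (hε : 0 < ε) :
    2 * (B * R).trace.re ≤
      ε * fro R + (1 / ε) * ∑ k, ∑ ℓ, (if k = ℓ then 0 else Complex.normSq (B k ℓ)) := by
  have key : ∀ k ℓ, 2 * (B k ℓ * R ℓ k).re ≤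
      ε * Complex.normSq (R ℓ k) + (1 / ε) * (if k = ℓ then 0 else Complex.normSq (B k ℓ)) := by
    intro k ℓ
    by_cases h : k = ℓ
    · subst h; rw [hRdiag k]
      simp [Complex.normSq_nonneg, mul_nonneg hε.le (Complex.normSq_nonneg _)]
    · simp only [if_neg h]
      have h1 : (B k ℓ * R ℓ k).re ≤ ‖B k ℓ‖ * ‖R ℓ k‖ := by
        have h0 := Complex.re_le_norm (B k ℓ * R ℓ k)
        rwa [norm_mul] at h0
      have ha := norm_nonneg (B k ℓ)
      have hb := norm_nonneg (R ℓ k)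
      have h2 : 2 * (‖B k ℓ‖ * ‖R ℓ k‖) ≤
          ε * ‖R ℓ k‖ ^ 2 + (1 / ε) * ‖B k ℓ‖ ^ 2 := by
        have hid : ε * ‖R ℓ k‖ ^ 2 + (1 / ε) * ‖B k ℓ‖ ^ 2
            - 2 * (‖B k ℓ‖ * ‖R ℓ k‖)
            = (1 / ε) * (‖B k ℓ‖ - ε * ‖R ℓ k‖) ^ 2 := by
          field_simp; ring
        have hpos : 0 ≤ (1 / ε) * (‖B k ℓ‖ - ε * ‖R ℓ k‖) ^ 2 :=
          mul_nonneg (le_of_lt (one_div_pos.mpr hε)) (sq_nonneg _)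
        linarith [hid, hpos]
      rw [← Complex.sq_norm, ← Complex.sq_norm]
      linarith
  calc 2 * (B * R).trace.re = ∑ k, ∑ ℓ, 2 * (B k ℓ * R ℓ k).re := by
        rw [trace_mul_re_expand, Finset.mul_sum]
        exact Finset.sum_congr rfl fun k _ => Finset.mul_sum _ _ _
    _ ≤ ∑ k, ∑ ℓ, (ε * Complex.normSq (R ℓ k)
          + (1 / ε) * (if k = ℓ then 0 else Complex.normSq (B k ℓ))) :=
        Finset.sum_le_sum fun k _ => Finset.sum_le_sum fun ℓ _ => key k ℓ
    _ = ε * (∑ k, ∑ ℓ, Complex.normSq (R ℓ k))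
          + (1 / ε) * ∑ k, ∑ ℓ, (if k = ℓ then 0 else Complex.normSq (B k ℓ)) := by
        simp only [Finset.sum_add_distrib, ← Finset.mul_sum]
    _ = ε * fro R + (1 / ε) * ∑ k, ∑ ℓ, (if k = ℓ then 0 else Complex.normSq (B k ℓ)) := by
        rw [fro, Finset.sum_comm]

lemma key_bound (A Nn B R : Matrix n n ℂ) (hA : A.PosSemidef)
    {β c₀ : ℝ} (hβ : 0 < β) (hc₀ : 0 < c₀)
    (hAform : ∀ x, nsq x ≤ β * (star x ⬝ᵥ A *ᵥ x).re)
    (hNc : (Nn - (c₀ : ℂ) • 1).PosSemidef)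
    (hRdiag : ∀ k, R k k = 0) :
    2 * (B * R).trace.re + (A * R * (-Nn) * Rᴴ).trace.re ≤
      (β / c₀) * ∑ k, ∑ ℓ, (if k = ℓ then 0 else Complex.normSq (B k ℓ)) := by
  have hQ : (Rᴴ * A * R).PosSemidef := hA.conjTranspose_mul_mul_same R
  have hcyc : (A * R * Nn * Rᴴ).trace = (Nn * (Rᴴ * A * R)).trace := by
    calc (A * R * Nn * Rᴴ).trace = (Rᴴ * (A * R * Nn)).trace := (trace_mul_comm _ _).symm
      _ = (Nn * (Rᴴ * A * R)).trace := by
          rw [show Rᴴ * (A * R * Nn) = (Rᴴ * A * R) * Nn by noncomm_ring, trace_mul_comm]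
  have hsplit : (Nn * (Rᴴ * A * R)).trace
      = ((Nn - (c₀ : ℂ) • 1) * (Rᴴ * A * R)).trace + (c₀ : ℂ) * (Rᴴ * A * R).trace := by
    have e : Nn * (Rᴴ * A * R) = (Nn - (c₀ : ℂ) • 1) * (Rᴴ * A * R) + (c₀ : ℂ) • (Rᴴ * A * R) := by
      rw [sub_mul, Matrix.smul_mul, Matrix.one_mul, sub_add_cancel]
    rw [e, trace_add, trace_smul, smul_eq_mul]
  have h1 : 0 ≤ ((Nn - (c₀ : ℂ) • 1) * (Rᴴ * A * R)).trace.re := trace_psd_re_nonneg hNc hQ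
  have h2 : fro R ≤ β * (Rᴴ * A * R).trace.re := quad_lower hβ hAform R
  have h3 : c₀ / β * fro R ≤ (A * R * Nn * Rᴴ).trace.re := by
    rw [hcyc, hsplit]
    have h4 : ((c₀ : ℂ) * (Rᴴ * A * R).trace).re = c₀ * (Rᴴ * A * R).trace.re :=
      Complex.re_ofReal_mul _ _
    rw [Complex.add_re, h4]
    have h5 : c₀ / β * fro R ≤ c₀ * (Rᴴ * A * R).trace.re := by
      have h6 : fro R / β ≤ (Rᴴ * A * R).trace.re := by
        rw [div_le_iff₀ hβ, mul_comm]; exact h2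
      calc c₀ / β * fro R = c₀ * (fro R / β) := by ring
        _ ≤ c₀ * (Rᴴ * A * R).trace.re := mul_le_mul_of_nonneg_left h6 hc₀.le
    linarith
  have hneg : (A * R * (-Nn) * Rᴴ).trace.re = -(A * R * Nn * Rᴴ).trace.re := by
    rw [show A * R * (-Nn) * Rᴴ = -(A * R * Nn * Rᴴ) by noncomm_ring, trace_neg, Complex.neg_re]
  have hlin := lin_bound B R hRdiag (div_pos hc₀ hβ)
  rw [hneg]
  have hfinal : 2 * (B * R).trace.re ≤
      (c₀ / β) * fro R + (β / c₀) * ∑ k, ∑ ℓ, (if k = ℓ then 0 else Complex.normSq (B k ℓ)) := by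
    have : 1 / (c₀ / β) = β / c₀ := by field_simp
    rw [← this]
    exact hlin
  linarith

end GMI3

namespace GMI4
open GMI GMI2 GMI3
variable {m n : Type*} [Fintype m] [Fintype n] [DecidableEq n]

lemma dot_psd_expand' (B : Matrix m n ℂ) (z w : n → ℂ) :
    star z ⬝ᵥ (Bᴴ * B) *ᵥ w = star (B *ᵥ z) ⬝ᵥ (B *ᵥ w) := by
  rw [star_mulVec, ← mulVec_mulVec, dotProduct_mulVec]

lemma nsq_eq_zero_iff {x : n → ℂ} : nsq x = 0 ↔ x = 0 := by
  constructor
  · intro h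
    funext i
    have h1 : ∀ j ∈ Finset.univ, (0:ℝ) ≤ Complex.normSq (x j) :=
      fun j _ => Complex.normSq_nonneg _
    have h2 := (Finset.sum_eq_zero_iff_of_nonneg h1).mp h i (Finset.mem_univ i)
    exact Complex.normSq_eq_zero.mp h2
  · rintro rfl; simp [nsq]

lemma nsq_pos_of_ne_zero {x : n → ℂ} (hx : x ≠ 0) : 0 < nsq x :=
  lt_of_le_of_ne (nsq_nonneg x) fun h => hx (nsq_eq_zero_iff.mp h.symm)

lemma entry_bound {W : Matrix n n ℂ} (hW : W.PosSemidef) {d : ℝ} (hd : 0 ≤ d)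
    (h : ∀ x, (star x ⬝ᵥ W *ᵥ x).re ≤ d * nsq x) (k ℓ : n) :
    ‖W k ℓ‖ ≤ d := by
  have hcs := psd_cs hW (Pi.single k 1) (Pi.single ℓ 1)
  simp only [qf_single] at hcs
  have hnsq : ∀ j : n, nsq (Pi.single j (1:ℂ) : n → ℂ) = 1 := by
    intro j
    simp [nsq, Pi.single_apply, apply_ite Complex.normSq]
  have hk := h (Pi.single k 1)
  have hl := h (Pi.single ℓ 1)
  rw [qf_single, hnsq, mul_one] at hk
  rw [qf_single, hnsq, mul_one] at hl
  have hk0 : 0 ≤ (star (Pi.single k 1 : n → ℂ) ⬝ᵥ W *ᵥ (Pi.single k 1 : n → ℂ)).re :=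
    psd_re_nonneg hW _
  have hl0 : 0 ≤ (star (Pi.single ℓ 1 : n → ℂ) ⬝ᵥ W *ᵥ (Pi.single ℓ 1 : n → ℂ)).re :=
    psd_re_nonneg hW _
  rw [qf_single] at hk0 hl0
  nlinarith [norm_nonneg (W k ℓ)]

lemma posDef_smul_one_add {T : Matrix n n ℂ} (hT : T.PosSemidef) {a : ℝ} (ha : 0 < a) :
    ((a : ℂ) • 1 + T).PosDef := by
  have hherm : ((a : ℂ) • 1 + T).IsHermitian := by
    apply IsHermitian.add _ hT.isHermitian
    rw [IsHermitian, conjTranspose_smul, conjTranspose_one]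
    simp [Complex.conj_ofReal]
  refine Matrix.PosDef.of_dotProduct_mulVec_pos hherm fun x hx => ?_
  rw [herm_form_real hherm x]
  refine Complex.zero_lt_real.mpr ?_
  have hform : (star x ⬝ᵥ ((a : ℂ) • 1 + T) *ᵥ x).re
      = a * nsq x + (star x ⬝ᵥ T *ᵥ x).re := by
    rw [add_mulVec, dotProduct_add, Complex.add_re, smul_mulVec, one_mulVec,
      dotProduct_smul, smul_eq_mul, Complex.re_ofReal_mul, star_dot_self_re]
  rw [hform]
  have h1 := psd_re_nonneg hT x
  have h2 := nsq_pos_of_ne_zero hx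
  nlinarith

lemma form_smul_re (W : Matrix n n ℂ) (a : ℝ) (x : n → ℂ) :
    (star x ⬝ᵥ ((a : ℂ) • W) *ᵥ x).re = a * (star x ⬝ᵥ W *ᵥ x).re := by
  rw [smul_mulVec, dotProduct_smul, smul_eq_mul, Complex.re_ofReal_mul]

end GMI4

set_option maxHeartbeats 2000000

/-- Lemma 4 of the paper. The GMI increment
`δ₂(N₀) = sup_R { 2 Re Tr(P M(N₀) R) + Tr((I+G(N₀))⁻¹ R M̃(N₀) Rᴴ) }` (supremum over `R`
supported on an off-diagonal set `𝒮`), evaluated at the optimal banded `G(N₀)`, is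
nonnegative and satisfies `δ₂(N₀) = O(N₀)` as `N₀ → 0⁺` and `δ₂(N₀) = O(1/N₀²)` as
`N₀ → ∞`. -/
theorem gmi_increment_snr_asymptotics {N K : ℕ} (hK : 1 ≤ K)
    (H : Matrix (Fin N) (Fin K) ℂ) (hinv : IsUnit (Hᴴ * H))
    (p : Fin K → ℝ) (hp : ∀ k, 0 < p k ∧ p k < 1)
    (P : Matrix (Fin K) (Fin K) ℂ) (hP : P = Matrix.diagonal fun k => ((p k : ℝ) : ℂ))
    (hPne : P ≠ 0)
    (ν : ℕ) (S : Set (Fin K × Fin K)) (hS : ∀ k : Fin K, (k, k) ∉ S)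
    (M Mt : ℝ → Matrix (Fin K) (Fin K) ℂ)
    (hM : ∀ N₀ : ℝ, M N₀ = Hᴴ * ((N₀ : ℂ) • 1 + H * Hᴴ)⁻¹ * H - 1)
    (hMt : ∀ N₀ : ℝ, Mt N₀ = P * (1 + M N₀) * P - P)
    (G : ℝ → Matrix (Fin K) (Fin K) ℂ)
    (hG : ∀ N₀ : ℝ, 0 < N₀ →
      (G N₀).IsHermitian ∧
      (∀ k ℓ : Fin K, |((k : ℕ) : ℤ) - ((ℓ : ℕ) : ℤ)| > (ν : ℤ) → G N₀ k ℓ = 0) ∧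
      (1 + G N₀).PosDef ∧
      bandPart ν (1 + G N₀)⁻¹ = -(bandPart ν (M N₀)))
    (δ₂ : ℝ → ℝ)
    (hδ₂ : ∀ N₀ : ℝ, δ₂ N₀ = sSup {r : ℝ | ∃ R : Matrix (Fin K) (Fin K) ℂ,
      (∀ k ℓ : Fin K, (k, ℓ) ∉ S → R k ℓ = 0) ∧
      r = 2 * (Matrix.trace (P * M N₀ * R)).re
        + (Matrix.trace ((1 + G N₀)⁻¹ * R * Mt N₀ * Rᴴ)).re}) :
    (∀ N₀ : ℝ, 0 < N₀ → 0 ≤ δ₂ N₀) ∧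
      δ₂ =O[𝓝[>] (0 : ℝ)] (fun N₀ => N₀) ∧
      δ₂ =O[atTop] (fun N₀ => 1 / N₀ ^ 2) := by
  classical
  haveI instNE : Nonempty (Fin K) := ⟨⟨0, hK⟩⟩
  have hKpos : (0 : ℝ) < (K : ℝ) := by exact_mod_cast Nat.lt_of_lt_of_le Nat.zero_lt_one hK
  set T : Matrix (Fin K) (Fin K) ℂ := Hᴴ * H with hT
  have hTpsd : T.PosSemidef := Matrix.posSemidef_conjTranspose_mul_self H
  have hdetT : IsUnit T.det := (Matrix.isUnit_iff_isUnit_det T).mp hinv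
  have hTpd : T.PosDef := by
    refine Matrix.PosDef.of_dotProduct_mulVec_pos hTpsd.isHermitian fun x hx => ?_
    have hform : star x ⬝ᵥ T *ᵥ x = ((GMI.nsq (H *ᵥ x) : ℝ) : ℂ) := by
      rw [hT, GMI4.dot_psd_expand', GMI.star_dot_self]
    rw [hform]
    refine Complex.zero_lt_real.mpr (GMI4.nsq_pos_of_ne_zero ?_)
    intro hHx
    apply hx
    have h1 : T *ᵥ x = 0 := by rw [hT, ← Matrix.mulVec_mulVec, hHx, Matrix.mulVec_zero]
    obtain ⟨u, hu⟩ := hinv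
    have h3 : ((↑u⁻¹ : Matrix (Fin K) (Fin K) ℂ) * T) = 1 := by
      rw [← hu]; exact u.inv_mul
    calc x = ((↑u⁻¹ : Matrix (Fin K) (Fin K) ℂ) * T) *ᵥ x := by rw [h3, Matrix.one_mulVec]
      _ = (↑u⁻¹ : Matrix (Fin K) (Fin K) ℂ) *ᵥ (T *ᵥ x) := (Matrix.mulVec_mulVec _ _ _).symm
      _ = 0 := by rw [h1, Matrix.mulVec_zero]
  set c : ℝ := T.trace.re with hc
  have hc0 : 0 ≤ c := by
    have h := GMI2.trace_psd_re_nonneg hTpsd Matrix.PosSemidef.one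
    rwa [Matrix.mul_one] at h
  have hTinvpd : (T⁻¹).PosDef := hTpd.inv
  set τ : ℝ := (T⁻¹).trace.re with hτ
  have hτpos : 0 < τ := by
    have hdiagpos : ∀ k : Fin K, 0 < ((T⁻¹) k k).re := by
      intro k
      have hne : (Pi.single k 1 : Fin K → ℂ) ≠ 0 := by
        intro h
        have h2 : (Pi.single k 1 : Fin K → ℂ) k = 0 := by rw [h]; rfl
        rw [Pi.single_eq_same] at h2
        exact one_ne_zero h2
      have h1 := hTinvpd.dotProduct_mulVec_pos hne
      rw [GMI.qf_single] at h1
      exact (Complex.lt_def.mp h1).1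
    rw [hτ, Matrix.trace, Complex.re_sum]
    exact Finset.sum_pos (fun k _ => hdiagpos k) Finset.univ_nonempty
  set tT : ℝ := ∑ j, ∑ l, ‖T j l‖ with htTdef
  have htTcol : ∀ l, ∑ j, ‖T j l‖ ≤ tT := by
    intro l
    rw [htTdef]
    refine Finset.sum_le_sum fun j _ => ?_
    exact Finset.single_le_sum (fun i _ => norm_nonneg _) (Finset.mem_univ l)
  set c₀ : ℝ := Finset.univ.inf' Finset.univ_nonempty (fun k => p k - (p k) ^ 2) with hc₀def
  have hc₀pos : 0 < c₀ := by
    rw [hc₀def, Finset.lt_inf'_iff]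
    intro k _
    have := hp k
    nlinarith [this.1, this.2]
  have hc₀le : ∀ k, c₀ ≤ p k - (p k) ^ 2 := fun k => Finset.inf'_le _ (Finset.mem_univ k)
  set offsum : ℝ → ℝ := fun N₀ =>
    ∑ k, ∑ ℓ, (if k = ℓ then 0 else Complex.normSq ((P * M N₀) k ℓ)) with hoffsumdef
  have hoffsum_nonneg : ∀ N₀, 0 ≤ offsum N₀ := by
    intro N₀
    refine Finset.sum_nonneg fun k _ => Finset.sum_nonneg fun ℓ _ => ?_
    by_cases h : k = ℓ <;> simp [h, Complex.normSq_nonneg]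
  have master : ∀ N₀ : ℝ, 0 < N₀ →
      (0 ≤ δ₂ N₀ ∧ δ₂ N₀ ≤ ((K : ℝ) * (N₀ + c) / N₀ / c₀) * offsum N₀) ∧
      offsum N₀ ≤ (K : ℝ) ^ 2 * (N₀ * τ) ^ 2 ∧
      offsum N₀ ≤ (K : ℝ) ^ 2 * (tT / N₀) ^ 2 := by
    intro N₀ hN
    obtain ⟨hGherm, hGband, hGpd, hGinv⟩ := hG N₀ hN
    set S₁ : Matrix (Fin K) (Fin K) ℂ := (N₀ : ℂ) • 1 + T with hS₁def
    have hS₁pd : S₁.PosDef := GMI4.posDef_smul_one_add hTpsd hN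
    have hdetS₁ : IsUnit S₁.det := (Matrix.isUnit_iff_isUnit_det S₁).mp hS₁pd.isUnit
    set S₀ : Matrix (Fin N) (Fin N) ℂ := (N₀ : ℂ) • 1 + H * Hᴴ with hS₀def
    have hS₀pd : S₀.PosDef :=
      GMI4.posDef_smul_one_add (Matrix.posSemidef_self_mul_conjTranspose H) hN
    have hdetS₀ : IsUnit S₀.det := (Matrix.isUnit_iff_isUnit_det S₀).mp hS₀pd.isUnit
    have hcomm : S₁ * Hᴴ = Hᴴ * S₀ := by
      rw [hS₁def, hS₀def, Matrix.add_mul, Matrix.mul_add, Matrix.smul_mul, Matrix.mul_smul,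
        Matrix.one_mul, Matrix.mul_one, hT, Matrix.mul_assoc]
    have hHS₀ : Hᴴ * S₀⁻¹ = S₁⁻¹ * Hᴴ := by
      have h1 : S₁⁻¹ * (S₁ * Hᴴ * S₀⁻¹) = Hᴴ * S₀⁻¹ := by
        rw [← Matrix.mul_assoc S₁⁻¹, ← Matrix.mul_assoc S₁⁻¹,
          Matrix.nonsing_inv_mul _ hdetS₁, Matrix.one_mul]
      rw [← h1, hcomm, Matrix.mul_assoc, Matrix.mul_nonsing_inv _ hdetS₀, Matrix.mul_one]
    have hM1 : M N₀ = S₁⁻¹ * T - 1 := by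
      rw [hM N₀, ← hS₀def, hHS₀, Matrix.mul_assoc, ← hT]
    have hM2 : M N₀ = -((N₀ : ℂ) • S₁⁻¹) := by
      rw [hM1]
      have hTS : T - S₁ = -((N₀ : ℂ) • 1) := by rw [hS₁def]; abel
      calc S₁⁻¹ * T - 1 = S₁⁻¹ * T - S₁⁻¹ * S₁ := by rw [Matrix.nonsing_inv_mul _ hdetS₁]
        _ = S₁⁻¹ * (T - S₁) := (Matrix.mul_sub _ _ _).symm
        _ = S₁⁻¹ * (-((N₀ : ℂ) • 1)) := by rw [hTS]
        _ = -((N₀ : ℂ) • S₁⁻¹) := by rw [Matrix.mul_neg, Matrix.mul_smul, Matrix.mul_one]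
    have hnegM : -(M N₀) = (N₀ : ℂ) • S₁⁻¹ := by rw [hM2, neg_neg]
    have hS₁invpsd : (S₁⁻¹).PosSemidef := hS₁pd.inv.posSemidef
    have hMherm : (M N₀).IsHermitian := by
      rw [hM2]
      refine Matrix.IsHermitian.neg ?_
      rw [Matrix.IsHermitian, Matrix.conjTranspose_smul, hS₁pd.inv.isHermitian.eq]
      norm_num
    have hformT_up : ∀ x, (star x ⬝ᵥ T *ᵥ x).re ≤ c * GMI.nsq x := by
      intro x; rw [hc]; exact GMI.qf_le_trace hTpsd x
    have hformTinv_up : ∀ x, (star x ⬝ᵥ T⁻¹ *ᵥ x).re ≤ τ * GMI.nsq x := by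
      intro x; rw [hτ]; exact GMI.qf_le_trace hTinvpd.posSemidef x
    have hformT_lo : ∀ x, (1 / τ) * GMI.nsq x ≤ (star x ⬝ᵥ T *ᵥ x).re := by
      intro x
      have h1 := GMI2.inv_qf_lower hTinvpd hτpos hformTinv_up x
      rw [Matrix.nonsing_inv_nonsing_inv _ hdetT] at h1
      have h2 : GMI.nsq x / τ ≤ (star x ⬝ᵥ T *ᵥ x).re := by
        rw [div_le_iff₀ hτpos]; linarith [h1]
      calc (1 / τ) * GMI.nsq x = GMI.nsq x / τ := by ring
        _ ≤ _ := h2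
    have hformS₁ : ∀ x, (star x ⬝ᵥ S₁ *ᵥ x).re = N₀ * GMI.nsq x + (star x ⬝ᵥ T *ᵥ x).re := by
      intro x
      rw [hS₁def, Matrix.add_mulVec, dotProduct_add, Complex.add_re, Matrix.smul_mulVec,
        Matrix.one_mulVec, dotProduct_smul, smul_eq_mul, Complex.re_ofReal_mul,
        GMI.star_dot_self_re]
    have hS₁_up : ∀ x, (star x ⬝ᵥ S₁ *ᵥ x).re ≤ (N₀ + c) * GMI.nsq x := by
      intro x; rw [hformS₁]; nlinarith [hformT_up x, GMI.nsq_nonneg x]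
    have hS₁_loa : ∀ x, N₀ * GMI.nsq x ≤ (star x ⬝ᵥ S₁ *ᵥ x).re := by
      intro x; rw [hformS₁]; linarith [GMI.psd_re_nonneg hTpsd x]
    have hS₁_lob : ∀ x, (1 / τ) * GMI.nsq x ≤ (star x ⬝ᵥ S₁ *ᵥ x).re := by
      intro x; rw [hformS₁]
      have h1 := mul_nonneg hN.le (GMI.nsq_nonneg x)
      linarith [hformT_lo x]
    have hNc' : (0 : ℝ) < N₀ + c := by linarith
    have hS₁inv_lo : ∀ x, GMI.nsq x ≤ (N₀ + c) * (star x ⬝ᵥ S₁⁻¹ *ᵥ x).re :=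
      GMI2.inv_qf_lower hS₁pd hNc' hS₁_up
    have hS₁inv_upa : ∀ x, (star x ⬝ᵥ S₁⁻¹ *ᵥ x).re ≤ (1 / N₀) * GMI.nsq x :=
      GMI2.inv_qf_upper hS₁pd hN hS₁_loa
    have hS₁inv_upb : ∀ x, (star x ⬝ᵥ S₁⁻¹ *ᵥ x).re ≤ τ * GMI.nsq x := by
      intro x
      have h1 := GMI2.inv_qf_upper hS₁pd (by positivity : (0 : ℝ) < 1 / τ) hS₁_lob x
      rwa [one_div_one_div] at h1
    have hS₁entry_a : ∀ k ℓ, ‖S₁⁻¹ k ℓ‖ ≤ 1 / N₀ :=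
      GMI4.entry_bound hS₁invpsd (by positivity) hS₁inv_upa
    have hS₁entry_b : ∀ k ℓ, ‖S₁⁻¹ k ℓ‖ ≤ τ :=
      GMI4.entry_bound hS₁invpsd hτpos.le hS₁inv_upb
    have hMentry_a : ∀ k ℓ, ‖M N₀ k ℓ‖ ≤ N₀ * τ := by
      intro k ℓ
      have h1 : M N₀ k ℓ = -((N₀ : ℂ) * S₁⁻¹ k ℓ) := by
        rw [hM2]; simp [Matrix.neg_apply, Matrix.smul_apply, smul_eq_mul]
      rw [h1, norm_neg, norm_mul, Complex.norm_real, Real.norm_eq_abs, abs_of_pos hN]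
      exact mul_le_mul_of_nonneg_left (hS₁entry_b k ℓ) hN.le
    have hMentry_b : ∀ k ℓ, k ≠ ℓ → ‖M N₀ k ℓ‖ ≤ tT / N₀ := by
      intro k ℓ hkl
      have h1 : M N₀ k ℓ = ∑ j, S₁⁻¹ k j * T j ℓ := by
        rw [hM1, Matrix.sub_apply, Matrix.one_apply_ne hkl, sub_zero, Matrix.mul_apply]
      rw [h1]
      calc ‖∑ j, S₁⁻¹ k j * T j ℓ‖ ≤ ∑ j, ‖S₁⁻¹ k j * T j ℓ‖ :=
            norm_sum_le _ _
        _ ≤ ∑ j, (1 / N₀) * ‖T j ℓ‖ := by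
            refine Finset.sum_le_sum fun j _ => ?_
            rw [norm_mul]
            exact mul_le_mul_of_nonneg_right (hS₁entry_a k j) (norm_nonneg _)
        _ = (1 / N₀) * ∑ j, ‖T j ℓ‖ := by rw [Finset.mul_sum]
        _ ≤ (1 / N₀) * tT := by
            exact mul_le_mul_of_nonneg_left (htTcol ℓ) (by positivity)
        _ = tT / N₀ := by ring
    -- positive semidefiniteness facts
    have hnegMlo : ∀ x, (N₀ / (N₀ + c)) * GMI.nsq x ≤ (star x ⬝ᵥ (-(M N₀)) *ᵥ x).re := by
      intro x
      have h1 := hS₁inv_lo x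
      have hform : (star x ⬝ᵥ (-(M N₀)) *ᵥ x).re = N₀ * (star x ⬝ᵥ S₁⁻¹ *ᵥ x).re := by
        rw [hnegM]; exact GMI4.form_smul_re _ _ _
      rw [hform]
      have h2 : GMI.nsq x / (N₀ + c) ≤ (star x ⬝ᵥ S₁⁻¹ *ᵥ x).re := by
        rw [div_le_iff₀ hNc']; linarith [h1]
      calc N₀ / (N₀ + c) * GMI.nsq x = N₀ * (GMI.nsq x / (N₀ + c)) := by ring
        _ ≤ N₀ * (star x ⬝ᵥ S₁⁻¹ *ᵥ x).re := mul_le_mul_of_nonneg_left h2 hN.le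
    have hm'pos : 0 < N₀ / (N₀ + c) := div_pos hN hNc'
    have hnegMpsd : (-(M N₀)).PosSemidef := by
      refine GMI2.posSemidef_of_re hMherm.neg fun x => ?_
      have := hnegMlo x
      have h0 : 0 ≤ (N₀ / (N₀ + c)) * GMI.nsq x := mul_nonneg hm'pos.le (GMI.nsq_nonneg x)
      linarith
    have hPherm : P.IsHermitian := by
      rw [hP]
      refine Matrix.isHermitian_diagonal_of_self_adjoint _ ?_
      funext k
      simp [Pi.star_apply, Complex.conj_ofReal]
    -- the matrix Nn with Mt N₀ = -Nn
    set Nn : Matrix (Fin K) (Fin K) ℂ := P * (-(M N₀)) * P + (P - P * P) with hNndef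
    have hMtval : Mt N₀ = -Nn := by
      rw [hMt N₀, hNndef]
      noncomm_ring
    have hNcpsd : (Nn - ((c₀ : ℝ) : ℂ) • 1).PosSemidef := by
      have h1 : (P * (-(M N₀)) * P).PosSemidef := by
        have h2 := hnegMpsd.conjTranspose_mul_mul_same P
        rwa [hPherm.eq] at h2
      have h3 : (P - P * P - ((c₀ : ℝ) : ℂ) • 1).PosSemidef := by
        have hdiageq : P - P * P - ((c₀ : ℝ) : ℂ) • 1
            = Matrix.diagonal (fun k => ((p k - (p k) ^ 2 - c₀ : ℝ) : ℂ)) := by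
          rw [hP, Matrix.diagonal_mul_diagonal, Matrix.smul_one_eq_diagonal,
            Matrix.diagonal_sub, Matrix.diagonal_sub]
          refine congrArg Matrix.diagonal ?_
          funext k
          push_cast
          ring
        rw [hdiageq]
        refine Matrix.PosSemidef.diagonal ?_
        intro k
        refine Complex.zero_le_real.mpr ?_
        have := hc₀le k
        linarith
      have hsplit : Nn - ((c₀ : ℝ) : ℂ) • 1
          = (P * (-(M N₀)) * P) + (P - P * P - ((c₀ : ℝ) : ℂ) • 1) := by
        rw [hNndef]; abel
      rw [hsplit]
      exact h1.add h3
    -- band-trace identity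
    have hdetG : IsUnit (1 + G N₀).det := (Matrix.isUnit_iff_isUnit_det _).mp hGpd.isUnit
    have hpoint : ∀ k ℓ : Fin K, |((k : ℕ) : ℤ) - ((ℓ : ℕ) : ℤ)| ≤ (ν : ℤ) →
        (1 + G N₀)⁻¹ k ℓ = -(M N₀ k ℓ) := by
      intro k ℓ h
      have h1 := congrFun (congrFun hGinv k) ℓ
      simpa [bandPart, Matrix.neg_apply, h] using h1
    have htrK : ((1 + G N₀) * (-(M N₀))).trace = (K : ℂ) := by
      have hsum : ∀ k ℓ, (1 + G N₀) k ℓ * (-(M N₀)) ℓ k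
          = (1 + G N₀) k ℓ * (1 + G N₀)⁻¹ ℓ k := by
        intro k ℓ
        by_cases hb : |((ℓ : ℕ) : ℤ) - ((k : ℕ) : ℤ)| ≤ (ν : ℤ)
        · rw [Matrix.neg_apply, ← hpoint ℓ k hb]
        · push_neg at hb
          have hb2 : |((k : ℕ) : ℤ) - ((ℓ : ℕ) : ℤ)| > (ν : ℤ) := by
            rw [abs_sub_comm]; exact hb
          have hne : k ≠ ℓ := by
            intro h
            subst h
            simp at hb2
            omega
          have hzero : (1 + G N₀) k ℓ = 0 := by
            rw [Matrix.add_apply, Matrix.one_apply_ne hne, hGband k ℓ hb2, add_zero]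
          rw [hzero, zero_mul, zero_mul]
      have h2 : ((1 + G N₀) * (-(M N₀))).trace = ((1 + G N₀) * (1 + G N₀)⁻¹).trace := by
        simp only [Matrix.trace, Matrix.diag, Matrix.mul_apply]
        exact Finset.sum_congr rfl fun k _ => Finset.sum_congr rfl fun ℓ _ => hsum k ℓ
      rw [h2, Matrix.mul_nonsing_inv _ hdetG, Matrix.trace_one]
      simp
    -- trace bound for 1 + G
    have hYpsd : (-(M N₀) - ((N₀ / (N₀ + c) : ℝ) : ℂ) • 1).PosSemidef := by
      refine GMI2.posSemidef_of_re ?_ fun x => ?_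
      · refine Matrix.IsHermitian.sub hMherm.neg ?_
        rw [Matrix.IsHermitian, Matrix.conjTranspose_smul, Matrix.conjTranspose_one]
        norm_num
      · have hform : (star x ⬝ᵥ (-(M N₀) - ((N₀ / (N₀ + c) : ℝ) : ℂ) • 1) *ᵥ x).re
            = (star x ⬝ᵥ (-(M N₀)) *ᵥ x).re - (N₀ / (N₀ + c)) * GMI.nsq x := by
          rw [Matrix.sub_mulVec, dotProduct_sub, Complex.sub_re, Matrix.smul_mulVec,
            Matrix.one_mulVec, dotProduct_smul, smul_eq_mul, Complex.re_ofReal_mul,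
            GMI.star_dot_self_re]
        rw [hform]
        linarith [hnegMlo x]
    have htrA' : (N₀ / (N₀ + c)) * (1 + G N₀).trace.re ≤ (K : ℝ) := by
      have h1 := GMI2.trace_psd_re_nonneg hGpd.posSemidef hYpsd
      have h2 : ((1 + G N₀) * (-(M N₀) - ((N₀ / (N₀ + c) : ℝ) : ℂ) • 1)).trace
          = ((1 + G N₀) * (-(M N₀))).trace
            - ((N₀ / (N₀ + c) : ℝ) : ℂ) * (1 + G N₀).trace := by
        rw [Matrix.mul_sub, Matrix.trace_sub]
        congr 1
        rw [Matrix.mul_smul, Matrix.mul_one, Matrix.trace_smul, smul_eq_mul]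
      rw [h2, htrK] at h1
      have h3 : (((K : ℂ)) - ((N₀ / (N₀ + c) : ℝ) : ℂ) * (1 + G N₀).trace).re
          = (K : ℝ) - (N₀ / (N₀ + c)) * (1 + G N₀).trace.re := by
        rw [Complex.sub_re, Complex.re_ofReal_mul, Complex.natCast_re]
      rw [h3] at h1
      linarith
    set β : ℝ := (K : ℝ) * (N₀ + c) / N₀ with hβdef
    have hβpos : 0 < β := by
      rw [hβdef]
      exact div_pos (mul_pos hKpos hNc') hN
    have htrβ : (1 + G N₀).trace.re ≤ β := by
      rw [hβdef]
      rw [le_div_iff₀ hN]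
      have h4 : (N₀ / (N₀ + c)) * (1 + G N₀).trace.re * (N₀ + c) ≤ (K : ℝ) * (N₀ + c) :=
        mul_le_mul_of_nonneg_right htrA' hNc'.le
      calc (1 + G N₀).trace.re * N₀ = (N₀ / (N₀ + c)) * (1 + G N₀).trace.re * (N₀ + c) := by
            field_simp
        _ ≤ (K : ℝ) * (N₀ + c) := h4
    have hformA' : ∀ x, (star x ⬝ᵥ (1 + G N₀) *ᵥ x).re ≤ β * GMI.nsq x := by
      intro x
      have h1 := GMI.qf_le_trace hGpd.posSemidef x
      calc (star x ⬝ᵥ (1 + G N₀) *ᵥ x).re ≤ (1 + G N₀).trace.re * GMI.nsq x := h1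
        _ ≤ β * GMI.nsq x := mul_le_mul_of_nonneg_right htrβ (GMI.nsq_nonneg x)
    have hAform : ∀ x, GMI.nsq x ≤ β * (star x ⬝ᵥ (1 + G N₀)⁻¹ *ᵥ x).re :=
      GMI2.inv_qf_lower hGpd hβpos hformA'
    -- the bound for each admissible R
    have hbound : ∀ R : Matrix (Fin K) (Fin K) ℂ, (∀ k ℓ : Fin K, (k, ℓ) ∉ S → R k ℓ = 0) →
        2 * ((P * M N₀ * R).trace).re + (((1 + G N₀)⁻¹ * R * Mt N₀ * Rᴴ).trace).re
          ≤ β / c₀ * offsum N₀ := by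
      intro R hsupp
      have hRdiag : ∀ k, R k k = 0 := fun k => hsupp k k (hS k)
      have hApsd : ((1 + G N₀)⁻¹).PosSemidef := hGpd.inv.posSemidef
      have e1 : (1 + G N₀)⁻¹ * R * Mt N₀ * Rᴴ = (1 + G N₀)⁻¹ * R * (-Nn) * Rᴴ := by
        rw [hMtval]
      rw [e1]
      have h := GMI3.key_bound ((1 + G N₀)⁻¹) Nn (P * M N₀) R hApsd hβpos hc₀pos hAform
        hNcpsd hRdiag
      simpa [hoffsumdef] using h
    have hUB0 : 0 ≤ β / c₀ * offsum N₀ :=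
      mul_nonneg (div_nonneg hβpos.le hc₀pos.le) (hoffsum_nonneg N₀)
    have hmem0 : (0 : ℝ) ∈ {r : ℝ | ∃ R : Matrix (Fin K) (Fin K) ℂ,
        (∀ k ℓ : Fin K, (k, ℓ) ∉ S → R k ℓ = 0) ∧
        r = 2 * (Matrix.trace (P * M N₀ * R)).re
          + (Matrix.trace ((1 + G N₀)⁻¹ * R * Mt N₀ * Rᴴ)).re} := by
      refine ⟨0, fun k ℓ _ => rfl, ?_⟩
      simp
    refine ⟨⟨?_, ?_⟩, ?_, ?_⟩
    · rw [hδ₂ N₀]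
      refine le_csSup ⟨β / c₀ * offsum N₀, ?_⟩ hmem0
      rintro r ⟨R, hsupp, rfl⟩
      exact hbound R hsupp
    · rw [hδ₂ N₀]
      have heq : β / c₀ * offsum N₀ = ((K : ℝ) * (N₀ + c) / N₀ / c₀) * offsum N₀ := by
        rw [hβdef]
      rw [← heq]
      refine Real.sSup_le ?_ hUB0
      rintro r ⟨R, hsupp, rfl⟩
      exact hbound R hsupp
    · -- offsum ≤ K² (N₀ τ)²
      have hterm : ∀ k ℓ : Fin K,
          (if k = ℓ then 0 else Complex.normSq ((P * M N₀) k ℓ)) ≤ (N₀ * τ) ^ 2 := by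
        intro k ℓ
        by_cases h : k = ℓ
        · simp only [if_pos h]
          positivity
        · simp only [if_neg h]
          have hPM : (P * M N₀) k ℓ = ((p k : ℝ) : ℂ) * M N₀ k ℓ := by
            rw [hP, Matrix.diagonal_mul]
          rw [hPM, Complex.normSq_mul, Complex.normSq_ofReal]
          have h1 : Complex.normSq (M N₀ k ℓ) ≤ (N₀ * τ) ^ 2 := by
            rw [← Complex.sq_norm]
            have := hMentry_a k ℓ
            nlinarith [norm_nonneg (M N₀ k ℓ)]
          have hpk := hp k
          have hpp : p k * p k ≤ 1 := by nlinarith [hpk.1, hpk.2]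
          have hmn := Complex.normSq_nonneg (M N₀ k ℓ)
          nlinarith [mul_le_mul_of_nonneg_right hpp hmn]
      calc offsum N₀ ≤ ∑ _k : Fin K, ∑ _ℓ : Fin K, (N₀ * τ) ^ 2 := by
            simp only [hoffsumdef]
            exact Finset.sum_le_sum fun k _ => Finset.sum_le_sum fun ℓ _ => hterm k ℓ
        _ = (K : ℝ) ^ 2 * (N₀ * τ) ^ 2 := by
            simp [Finset.sum_const, Finset.card_univ]
            ring
    · -- offsum ≤ K² (tT/N₀)²
      have hterm : ∀ k ℓ : Fin K,
          (if k = ℓ then 0 else Complex.normSq ((P * M N₀) k ℓ)) ≤ (tT / N₀) ^ 2 := by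
        intro k ℓ
        by_cases h : k = ℓ
        · simp only [if_pos h]
          positivity
        · simp only [if_neg h]
          have hPM : (P * M N₀) k ℓ = ((p k : ℝ) : ℂ) * M N₀ k ℓ := by
            rw [hP, Matrix.diagonal_mul]
          rw [hPM, Complex.normSq_mul, Complex.normSq_ofReal]
          have h1 : Complex.normSq (M N₀ k ℓ) ≤ (tT / N₀) ^ 2 := by
            rw [← Complex.sq_norm]
            have := hMentry_b k ℓ h
            nlinarith [norm_nonneg (M N₀ k ℓ)]
          have hpk := hp k
          have hpp : p k * p k ≤ 1 := by nlinarith [hpk.1, hpk.2]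
          have hmn := Complex.normSq_nonneg (M N₀ k ℓ)
          nlinarith [mul_le_mul_of_nonneg_right hpp hmn]
      calc offsum N₀ ≤ ∑ _k : Fin K, ∑ _ℓ : Fin K, (tT / N₀) ^ 2 := by
            simp only [hoffsumdef]
            exact Finset.sum_le_sum fun k _ => Finset.sum_le_sum fun ℓ _ => hterm k ℓ
        _ = (K : ℝ) ^ 2 * (tT / N₀) ^ 2 := by
            simp [Finset.sum_const, Finset.card_univ]
            ring
  -- assemble the three claims
  refine ⟨fun N₀ hN => ((master N₀ hN).1).1, ?_, ?_⟩
  · rw [Asymptotics.isBigO_iff]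
    refine ⟨(K : ℝ) ^ 3 * τ ^ 2 / c₀ * (1 + c), ?_⟩
    have hmem : Set.Ioc (0 : ℝ) 1 ∈ 𝓝[>] (0 : ℝ) :=
      Ioc_mem_nhdsGT_of_mem ⟨le_refl 0, zero_lt_one⟩
    filter_upwards [hmem] with N₀ hN₀
    obtain ⟨⟨hge, hle⟩, hoff1, -⟩ := master N₀ hN₀.1
    rw [Real.norm_eq_abs, Real.norm_eq_abs, abs_of_nonneg hge, abs_of_nonneg hN₀.1.le]
    have hfac : 0 ≤ (K : ℝ) * (N₀ + c) / N₀ / c₀ := by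
      have h1 : 0 ≤ (K : ℝ) * (N₀ + c) := mul_nonneg hKpos.le (by linarith [hN₀.1, hc0])
      exact div_nonneg (div_nonneg h1 hN₀.1.le) hc₀pos.le
    calc δ₂ N₀ ≤ ((K : ℝ) * (N₀ + c) / N₀ / c₀) * offsum N₀ := hle
      _ ≤ ((K : ℝ) * (N₀ + c) / N₀ / c₀) * ((K : ℝ) ^ 2 * (N₀ * τ) ^ 2) :=
          mul_le_mul_of_nonneg_left hoff1 hfac
      _ = ((K : ℝ) ^ 3 * τ ^ 2 / c₀) * ((N₀ + c) * N₀) := by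
          have hN0 : N₀ ≠ 0 := ne_of_gt hN₀.1
          have hc₀0 : c₀ ≠ 0 := ne_of_gt hc₀pos
          field_simp
      _ ≤ ((K : ℝ) ^ 3 * τ ^ 2 / c₀) * ((1 + c) * N₀) := by
          have h2 : (N₀ + c) * N₀ ≤ (1 + c) * N₀ := by
            nlinarith [mul_nonneg hN₀.1.le (sub_nonneg.mpr hN₀.2)]
          refine mul_le_mul_of_nonneg_left h2 ?_
          positivity
      _ = (K : ℝ) ^ 3 * τ ^ 2 / c₀ * (1 + c) * N₀ := by ring
  · rw [Asymptotics.isBigO_iff]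
    refine ⟨(K : ℝ) ^ 3 * tT ^ 2 / c₀ * (1 + c), ?_⟩
    filter_upwards [eventually_ge_atTop (1 : ℝ)] with N₀ hN₁
    have hN : 0 < N₀ := lt_of_lt_of_le zero_lt_one hN₁
    obtain ⟨⟨hge, hle⟩, -, hoff2⟩ := master N₀ hN
    rw [Real.norm_eq_abs, Real.norm_eq_abs, abs_of_nonneg hge,
      abs_of_nonneg (by positivity : (0:ℝ) ≤ 1 / N₀ ^ 2)]
    have hfac : 0 ≤ (K : ℝ) * (N₀ + c) / N₀ / c₀ := by
      have h1 : 0 ≤ (K : ℝ) * (N₀ + c) := mul_nonneg hKpos.le (by linarith)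
      positivity
    calc δ₂ N₀ ≤ ((K : ℝ) * (N₀ + c) / N₀ / c₀) * offsum N₀ := hle
      _ ≤ ((K : ℝ) * (N₀ + c) / N₀ / c₀) * ((K : ℝ) ^ 2 * (tT / N₀) ^ 2) :=
          mul_le_mul_of_nonneg_left hoff2 hfac
      _ = ((K : ℝ) ^ 3 * tT ^ 2 / c₀) * ((N₀ + c) / N₀ ^ 3) := by
          have hN0 : N₀ ≠ 0 := ne_of_gt hN
          have hc₀0 : c₀ ≠ 0 := ne_of_gt hc₀pos
          field_simp
      _ ≤ ((K : ℝ) ^ 3 * tT ^ 2 / c₀) * ((1 + c) / N₀ ^ 2) := by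
          refine mul_le_mul_of_nonneg_left ?_ (by positivity)
          rw [div_le_div_iff₀ (by positivity) (by positivity)]
          nlinarith [mul_nonneg (mul_nonneg hc0 (sq_nonneg N₀)) (sub_nonneg.mpr hN₁)]
      _ = (K : ℝ) ^ 3 * tT ^ 2 / c₀ * (1 + c) * (1 / N₀ ^ 2) := by ring
end

section
/- Let H ∈ ℂ^{N×K} with HᴴH invertible and let C ∈ ℂ^{K×K} be Hermitian positive definite. Then: (i) lim_{N₀→0⁺} (Hᴴ(HCHᴴ + N₀I)⁻¹H − C⁻¹)/N₀ = −C⁻¹(HᴴH)⁻¹C⁻¹; (ii) lim_{N₀→∞} N₀ · Hᴴ(HCHᴴ + N₀I)⁻¹ = Hᴴ (limits entrywise; for every N₀ > 0 the matrix HCHᴴ + N₀I is positive definite, hence invertible). -/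
open Matrix Filter
open scoped ComplexOrder Topology

private lemma aux_smul_posSemidef {k : ℕ} {X : Matrix (Fin k) (Fin k) ℂ}
    (hX : X.PosSemidef) {r : ℝ} (hr : 0 ≤ r) : ((r : ℂ) • X).PosSemidef := by
  rw [posSemidef_iff_dotProduct_mulVec]
  constructor
  · show ((r : ℂ) • X)ᴴ = (r : ℂ) • X
    rw [conjTranspose_smul, hX.1.eq, Complex.star_def, Complex.conj_ofReal]
  · intro x
    rw [smul_mulVec, dotProduct_smul, smul_eq_mul]
    exact mul_nonneg (Complex.zero_le_real.mpr hr) (hX.dotProduct_mulVec_nonneg x)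

private lemma aux_tendsto_matrix_inv {k : ℕ} {l : Filter ℝ}
    {f : ℝ → Matrix (Fin k) (Fin k) ℂ} {M : Matrix (Fin k) (Fin k) ℂ}
    (hf : Tendsto f l (𝓝 M)) (hM : IsUnit M.det) :
    Tendsto (fun t => (f t)⁻¹) l (𝓝 M⁻¹) := by
  have hdet : Tendsto (fun t => (f t).det) l (𝓝 M.det) :=
    ((Continuous.matrix_det continuous_id).tendsto M).comp hf
  have hadj : Tendsto (fun t => (f t).adjugate) l (𝓝 M.adjugate) :=
    ((Continuous.matrix_adjugate continuous_id).tendsto M).comp hf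
  have hdne : M.det ≠ 0 := hM.ne_zero
  have h : Tendsto (fun t => (f t).det⁻¹ • (f t).adjugate) l (𝓝 (M.det⁻¹ • M.adjugate)) :=
    (hdet.inv₀ hdne).smul hadj
  simpa only [Matrix.inv_def, Ring.inverse_eq_inv] using h

/-- Appendix K of the paper. For `HᴴH` invertible and `C` Hermitian
positive definite: (i) `(Hᴴ(HCHᴴ+N₀I)⁻¹H − C⁻¹)/N₀ → −C⁻¹(HᴴH)⁻¹C⁻¹` as `N₀ → 0⁺`;
(ii) `N₀ Hᴴ(HCHᴴ+N₀I)⁻¹ → Hᴴ` as `N₀ → ∞`; and `HCHᴴ + N₀I` is positive definite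
(hence invertible) for every `N₀ > 0`. -/
theorem lmmse_pic_snr_asymptotics {N K : ℕ}
    (H : Matrix (Fin N) (Fin K) ℂ) (hinv : IsUnit (Hᴴ * H))
    (C : Matrix (Fin K) (Fin K) ℂ) (hC : C.PosDef) :
    (∀ N₀ : ℝ, 0 < N₀ → (H * C * Hᴴ + (N₀ : ℂ) • 1).PosDef) ∧
      Tendsto (fun N₀ : ℝ =>
          (N₀ : ℂ)⁻¹ • (Hᴴ * (H * C * Hᴴ + (N₀ : ℂ) • 1)⁻¹ * H - C⁻¹))
        (𝓝[>] (0 : ℝ)) (𝓝 (-(C⁻¹ * (Hᴴ * H)⁻¹ * C⁻¹))) ∧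
      Tendsto (fun N₀ : ℝ => (N₀ : ℂ) • (Hᴴ * (H * C * Hᴴ + (N₀ : ℂ) • 1)⁻¹))
        atTop (𝓝 Hᴴ) := by
  set A : Matrix (Fin K) (Fin K) ℂ := Hᴴ * H with hA
  have hCu : IsUnit C := hC.isUnit
  have hCdet : IsUnit C.det := (Matrix.isUnit_iff_isUnit_det _).1 hCu
  have hAdet : IsUnit A.det := (Matrix.isUnit_iff_isUnit_det _).1 hinv
  have hAinvps : (A⁻¹).PosSemidef := (Matrix.posSemidef_conjTranspose_mul_self H).inv
  -- invertibility of `B N₀ = A*C + N₀•1` for `N₀ ≥ 0`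
  have hB : ∀ N₀ : ℝ, 0 ≤ N₀ → IsUnit (A * C + (N₀ : ℂ) • 1) := by
    intro N₀ h
    have h1 : (C + (N₀ : ℂ) • A⁻¹).PosDef :=
      hC.add_posSemidef (aux_smul_posSemidef hAinvps h)
    have h2 : A * (C + (N₀ : ℂ) • A⁻¹) = A * C + (N₀ : ℂ) • 1 := by
      rw [Matrix.mul_add, Matrix.mul_smul, Matrix.mul_nonsing_inv _ hAdet]
    exact h2 ▸ hinv.mul h1.isUnit
  -- Part 1: positive definiteness
  have part1 : ∀ N₀ : ℝ, 0 < N₀ → (H * C * Hᴴ + (N₀ : ℂ) • 1).PosDef := by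
    intro N₀ h
    refine Matrix.PosDef.posSemidef_add (hC.posSemidef.mul_mul_conjTranspose_same H) ?_
    rw [smul_one_eq_diagonal]
    exact Matrix.PosDef.diagonal fun _ => Complex.zero_lt_real.mpr h
  -- key identity: `Hᴴ (HCHᴴ + N₀)⁻¹ = (AC + N₀)⁻¹ Hᴴ`
  have key : ∀ N₀ : ℝ, 0 < N₀ →
      Hᴴ * (H * C * Hᴴ + (N₀ : ℂ) • 1)⁻¹ = (A * C + (N₀ : ℂ) • 1)⁻¹ * Hᴴ := by
    intro N₀ h
    set M : Matrix (Fin N) (Fin N) ℂ := H * C * Hᴴ + (N₀ : ℂ) • 1 with hM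
    set B : Matrix (Fin K) (Fin K) ℂ := A * C + (N₀ : ℂ) • 1 with hBdef
    have hMdet : IsUnit M.det := (Matrix.isUnit_iff_isUnit_det _).1 (part1 N₀ h).isUnit
    have hBdet : IsUnit B.det := (Matrix.isUnit_iff_isUnit_det _).1 (hB N₀ h.le)
    have hcomm : B * Hᴴ = Hᴴ * M := by
      simp only [hM, hBdef, hA, Matrix.mul_add, Matrix.add_mul, Matrix.mul_smul,
        Matrix.smul_mul, Matrix.mul_one, Matrix.one_mul, Matrix.mul_assoc]
    have step : Hᴴ * M⁻¹ = B⁻¹ * (B * Hᴴ) * M⁻¹ := by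
      rw [← Matrix.mul_assoc B⁻¹, Matrix.nonsing_inv_mul _ hBdet, Matrix.one_mul]
    rw [step, hcomm, Matrix.mul_assoc B⁻¹, Matrix.mul_assoc Hᴴ,
      Matrix.mul_nonsing_inv _ hMdet, Matrix.mul_one]
  refine ⟨part1, ?_, ?_⟩
  · -- limit as N₀ → 0⁺
    have heq : ∀ᶠ N₀ : ℝ in 𝓝[>] (0 : ℝ),
        -((A * C + (N₀ : ℂ) • 1)⁻¹ * C⁻¹) =
          (N₀ : ℂ)⁻¹ • (Hᴴ * (H * C * Hᴴ + (N₀ : ℂ) • 1)⁻¹ * H - C⁻¹) := by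
      filter_upwards [self_mem_nhdsWithin] with N₀ h
      have h : (0 : ℝ) < N₀ := h
      have hne : (N₀ : ℂ) ≠ 0 := Complex.ofReal_ne_zero.mpr h.ne'
      set B : Matrix (Fin K) (Fin K) ℂ := A * C + (N₀ : ℂ) • 1 with hBdef
      have hBdet : IsUnit B.det := (Matrix.isUnit_iff_isUnit_det _).1 (hB N₀ h.le)
      have h1 : Hᴴ * (H * C * Hᴴ + (N₀ : ℂ) • 1)⁻¹ * H = B⁻¹ * A := by
        rw [key N₀ h, Matrix.mul_assoc, ← hA]
      have h2 : B * C⁻¹ = A + (N₀ : ℂ) • C⁻¹ := by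
        rw [hBdef, Matrix.add_mul, Matrix.smul_mul, Matrix.one_mul, Matrix.mul_assoc,
          Matrix.mul_nonsing_inv _ hCdet, Matrix.mul_one]
      have h3 : B⁻¹ * A = C⁻¹ - (N₀ : ℂ) • (B⁻¹ * C⁻¹) := by
        have : A = B * C⁻¹ - (N₀ : ℂ) • C⁻¹ := by rw [h2]; abel
        rw [this, Matrix.mul_sub, Matrix.nonsing_inv_mul_cancel_left _ _ hBdet,
          Matrix.mul_smul]
      rw [h1, h3]
      rw [sub_sub_cancel_left, smul_neg, smul_smul, inv_mul_cancel₀ hne, one_smul]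
    have h0 : Tendsto (fun N₀ : ℝ => A * C + (N₀ : ℂ) • 1) (𝓝[>] (0 : ℝ)) (𝓝 (A * C)) := by
      have hc : Continuous fun N₀ : ℝ => A * C + (N₀ : ℂ) • 1 :=
        continuous_const.add ((Complex.continuous_ofReal).smul continuous_const)
      have := (hc.tendsto 0).mono_left (nhdsWithin_le_nhds (s := Set.Ioi (0 : ℝ)))
      simpa using this
    have hdet0 : IsUnit (A * C).det := (Matrix.isUnit_iff_isUnit_det _).1 (hinv.mul hCu)
    have hlim : Tendsto (fun N₀ : ℝ => -((A * C + (N₀ : ℂ) • 1)⁻¹ * C⁻¹)) (𝓝[>] (0 : ℝ))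
        (𝓝 (-(C⁻¹ * (Hᴴ * H)⁻¹ * C⁻¹))) := by
      have h1 := ((aux_tendsto_matrix_inv h0 hdet0).mul (tendsto_const_nhds (x := C⁻¹))).neg
      rw [Matrix.mul_inv_rev] at h1
      simpa [← hA, Matrix.mul_assoc] using h1
    exact hlim.congr' heq
  · -- limit as N₀ → ∞
    have heq : ∀ᶠ N₀ : ℝ in atTop,
        ((N₀ : ℂ)⁻¹ • (A * C) + 1)⁻¹ * Hᴴ =
          (N₀ : ℂ) • (Hᴴ * (H * C * Hᴴ + (N₀ : ℂ) • 1)⁻¹) := by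
      filter_upwards [eventually_gt_atTop (0 : ℝ)] with N₀ h
      have hne : (N₀ : ℂ) ≠ 0 := Complex.ofReal_ne_zero.mpr h.ne'
      set B : Matrix (Fin K) (Fin K) ℂ := A * C + (N₀ : ℂ) • 1 with hBdef
      have hBdet : IsUnit B.det := (Matrix.isUnit_iff_isUnit_det _).1 (hB N₀ h.le)
      have hD : ((N₀ : ℂ)⁻¹ • (A * C) + 1)⁻¹ = (N₀ : ℂ) • B⁻¹ := by
        apply Matrix.inv_eq_right_inv
        have hDB : (N₀ : ℂ)⁻¹ • (A * C) + 1 = (N₀ : ℂ)⁻¹ • B := by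
          rw [hBdef, smul_add, smul_smul, inv_mul_cancel₀ hne, one_smul]
        rw [hDB, Matrix.smul_mul, Matrix.mul_smul, smul_smul,
          inv_mul_cancel₀ hne, one_smul, Matrix.mul_nonsing_inv _ hBdet]
      rw [key N₀ h, hD, Matrix.smul_mul]
    have hinvN : Tendsto (fun N₀ : ℝ => (N₀ : ℂ)⁻¹) atTop (𝓝 0) := by
      have h1 : Tendsto (fun N₀ : ℝ => ((N₀⁻¹ : ℝ) : ℂ)) atTop (𝓝 ((0 : ℝ) : ℂ)) :=
        (Complex.continuous_ofReal.tendsto 0).comp tendsto_inv_atTop_zero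
      simpa using h1
    have h1 : Tendsto (fun N₀ : ℝ => (N₀ : ℂ)⁻¹ • (A * C) + 1) atTop
        (𝓝 (1 : Matrix (Fin K) (Fin K) ℂ)) := by
      have := (hinvN.smul (tendsto_const_nhds (x := A * C) (f := atTop))).add
        (tendsto_const_nhds (x := (1 : Matrix (Fin K) (Fin K) ℂ)) (f := atTop))
      simpa using this
    have h2 : Tendsto (fun N₀ : ℝ => ((N₀ : ℂ)⁻¹ • (A * C) + 1)⁻¹ * Hᴴ) atTop (𝓝 Hᴴ) := by
      have hdet1 : IsUnit (1 : Matrix (Fin K) (Fin K) ℂ).det := by simp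
      have hc2 : Continuous fun X : Matrix (Fin K) (Fin K) ℂ => X * Hᴴ :=
        Continuous.matrix_mul continuous_id continuous_const
      have := (hc2.tendsto (1 : Matrix (Fin K) (Fin K) ℂ)⁻¹).comp (aux_tendsto_matrix_inv h1 hdet1)
      simpa [Function.comp_def] using this
    exact h2.congr' heq
end
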